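/- Let C ∈ ℝ^{m×n}, ε > 0, K_{ij} = exp(−C_{ij}/ε), and let p ∈ ℝ^m, q ∈ ℝ^n be probability vectors with strictly positive entries. Then the minimiser π† of Σ_{i,j} C_{ij} π_{ij} − ε H(π) over the transport polytope U(p,q) exists, is unique, and has the form π† = diag(u) K diag(v) for some vectors u ∈ ℝ_{>0}^m and v ∈ ℝ_{>0}^n; equivalently, there exist positive scaling vectors u, v such that diag(u) K diag(v) has row sums p and column sums q, and this matrix is the unique minimiser. -/

import Mathlib

open Finset

/-- The transport polytope `U(a,b)`: nonnegative matrices with row sums `a` and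
column sums `b`. -/
def InPolytope {m n : ℕ} (a : Fin m → ℝ) (b : Fin n → ℝ) (π : Fin m → Fin n → ℝ) : Prop :=
  (∀ i j, 0 ≤ π i j) ∧ (∀ i, ∑ j, π i j = a i) ∧ (∀ j, ∑ i, π i j = b j)

/-- The Shannon entropy `H(π) = −∑ π_{ij} log π_{ij}` (with `0 log 0 = 0`,
as `Real.log 0 = 0`). -/
noncomputable def shannonH {m n : ℕ} (π : Fin m → Fin n → ℝ) : ℝ :=
  -∑ i, ∑ j, π i j * Real.log (π i j)

/-- The entropy-regularised transport objective `∑ C_{ij} π_{ij} − ε H(π)`. -/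
noncomputable def entObj {m n : ℕ} (C : Fin m → Fin n → ℝ) (ε : ℝ)
    (π : Fin m → Fin n → ℝ) : ℝ :=
  (∑ i, ∑ j, C i j * π i j) - ε * shannonH π

/-- Auxiliary: the objective written as a single sum over the product type. -/
noncomputable def objG {m n : ℕ} (C : Fin m → Fin n → ℝ) (ε : ℝ)
    (π : Fin m → Fin n → ℝ) : ℝ :=
  ∑ p : Fin m × Fin n, (C p.1 p.2 * π p.1 p.2 + ε * (π p.1 p.2 * Real.log (π p.1 p.2)))

lemma entObj_eq_objG {m n : ℕ} (C : Fin m → Fin n → ℝ) (ε : ℝ) (π : Fin m → Fin n → ℝ) :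
    entObj C ε π = objG C ε π := by
  simp only [entObj, shannonH, objG, Fintype.sum_prod_type, Finset.sum_add_distrib,
    ← Finset.mul_sum]
  ring

/-- The product distribution lies in the polytope. -/
lemma prod_mem_polytope {m n : ℕ} {a : Fin m → ℝ} {b : Fin n → ℝ}
    (ha : ∀ i, 0 < a i) (hb : ∀ j, 0 < b j)
    (ha1 : ∑ i, a i = 1) (hb1 : ∑ j, b j = 1) :
    InPolytope a b (fun i j => a i * b j) := by
  refine ⟨fun i j => mul_nonneg (ha i).le (hb j).le, fun i => ?_, fun j => ?_⟩
  · rw [← Finset.mul_sum, hb1, mul_one]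
  · rw [← Finset.sum_mul, ha1, one_mul]

lemma isClosed_polytope {m n : ℕ} (a : Fin m → ℝ) (b : Fin n → ℝ) :
    IsClosed {π : Fin m → Fin n → ℝ | InPolytope a b π} := by
  have hev : ∀ (i : Fin m) (j : Fin n),
      Continuous (fun π : Fin m → Fin n → ℝ => π i j) := fun i j =>
    (continuous_apply j).comp (continuous_apply i)
  have h1 : IsClosed {π : Fin m → Fin n → ℝ | ∀ i j, 0 ≤ π i j} := by
    have : {π : Fin m → Fin n → ℝ | ∀ i j, 0 ≤ π i j} =
        ⋂ i, ⋂ j, {π : Fin m → Fin n → ℝ | 0 ≤ π i j} := by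
      ext π; simp [Set.mem_iInter]
    rw [this]
    exact isClosed_iInter fun i => isClosed_iInter fun j =>
      isClosed_le continuous_const (hev i j)
  have h2 : IsClosed {π : Fin m → Fin n → ℝ | ∀ i, ∑ j, π i j = a i} := by
    have : {π : Fin m → Fin n → ℝ | ∀ i, ∑ j, π i j = a i} =
        ⋂ i, {π : Fin m → Fin n → ℝ | ∑ j, π i j = a i} := by
      ext π; simp [Set.mem_iInter]
    rw [this]
    exact isClosed_iInter fun i =>
      isClosed_eq (continuous_finset_sum _ fun j _ => hev i j) continuous_const
  have h3 : IsClosed {π : Fin m → Fin n → ℝ | ∀ j, ∑ i, π i j = b j} := by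
    have : {π : Fin m → Fin n → ℝ | ∀ j, ∑ i, π i j = b j} =
        ⋂ j, {π : Fin m → Fin n → ℝ | ∑ i, π i j = b j} := by
      ext π; simp [Set.mem_iInter]
    rw [this]
    exact isClosed_iInter fun j =>
      isClosed_eq (continuous_finset_sum _ fun i _ => hev i j) continuous_const
  have : {π : Fin m → Fin n → ℝ | InPolytope a b π} =
      {π : Fin m → Fin n → ℝ | ∀ i j, 0 ≤ π i j} ∩
      ({π : Fin m → Fin n → ℝ | ∀ i, ∑ j, π i j = a i} ∩
       {π : Fin m → Fin n → ℝ | ∀ j, ∑ i, π i j = b j}) := by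
    ext π; simp [InPolytope, Set.mem_setOf_eq, Set.mem_inter_iff, and_assoc]
  rw [this]
  exact h1.inter (h2.inter h3)

lemma entry_le_one {m n : ℕ} {a : Fin m → ℝ} {b : Fin n → ℝ}
    (ha : ∀ i, 0 < a i) (ha1 : ∑ i, a i = 1)
    {π : Fin m → Fin n → ℝ} (hπ : InPolytope a b π) (i : Fin m) (j : Fin n) :
    π i j ≤ 1 := by
  have h1 : π i j ≤ ∑ j', π i j' :=
    Finset.single_le_sum (fun j' _ => hπ.1 i j') (Finset.mem_univ j)
  have h2 : a i ≤ ∑ i', a i' :=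
    Finset.single_le_sum (fun i' _ => (ha i').le) (Finset.mem_univ i)
  rw [hπ.2.1 i] at h1
  rw [ha1] at h2
  linarith

lemma continuous_objG {m n : ℕ} (C : Fin m → Fin n → ℝ) (ε : ℝ) :
    Continuous (objG C ε) := by
  refine continuous_finset_sum _ fun p _ => ?_
  have hev : Continuous (fun π : Fin m → Fin n → ℝ => π p.1 p.2) :=
    (continuous_apply p.2).comp (continuous_apply p.1)
  exact (continuous_const.mul hev).add
    (continuous_const.mul (Real.continuous_mul_log.comp hev))

lemma exists_minimiser {m n : ℕ} (C : Fin m → Fin n → ℝ) (ε : ℝ)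
    {a : Fin m → ℝ} {b : Fin n → ℝ}
    (ha : ∀ i, 0 < a i) (hb : ∀ j, 0 < b j)
    (ha1 : ∑ i, a i = 1) (hb1 : ∑ j, b j = 1) :
    ∃ πopt, InPolytope a b πopt ∧
      ∀ π, InPolytope a b π → entObj C ε πopt ≤ entObj C ε π := by
  have hne : ∃ π, InPolytope a b π := ⟨_, prod_mem_polytope ha hb ha1 hb1⟩
  set S : Set (Fin m → Fin n → ℝ) := {π | InPolytope a b π}
  have hSne : S.Nonempty := hne
  have hsub : S ⊆ Set.univ.pi fun _ : Fin m => Set.univ.pi fun _ : Fin n => Set.Icc (0:ℝ) 1 := by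
    intro π hπ
    refine Set.mem_univ_pi.2 fun i => Set.mem_univ_pi.2 fun j => ?_
    exact ⟨hπ.1 i j, entry_le_one ha ha1 hπ i j⟩
  have hScomp : IsCompact S :=
    (isCompact_univ_pi fun _ => isCompact_univ_pi fun _ => isCompact_Icc).of_isClosed_subset
      (isClosed_polytope a b) hsub
  obtain ⟨πopt, hmem, hmin⟩ := hScomp.exists_isMinOn hSne (continuous_objG C ε).continuousOn
  exact ⟨πopt, hmem, fun π hπ => by
    rw [entObj_eq_objG, entObj_eq_objG]; exact hmin hπ⟩

lemma minimiser_unique {m n : ℕ} (C : Fin m → Fin n → ℝ) {ε : ℝ} (hε : 0 < ε)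
    {a : Fin m → ℝ} {b : Fin n → ℝ}
    {π πopt : Fin m → Fin n → ℝ} (hπ : InPolytope a b π) (hπopt : InPolytope a b πopt) :
    π = πopt ∨ ∃ μ, InPolytope a b μ ∧ entObj C ε μ < (entObj C ε π + entObj C ε πopt) / 2 := by
  by_cases hne : π = πopt
  · exact Or.inl hne
  right
  replace hne : ∃ k l, π k l ≠ πopt k l := by
    by_contra h
    push_neg at h
    exact hne (funext fun k => funext fun l => h k l)
  obtain ⟨k, l, hl⟩ := hne
  refine ⟨fun i j => (π i j + πopt i j) / 2, ?_, ?_⟩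
  · refine ⟨fun i j => by have := hπ.1 i j; have := hπopt.1 i j; linarith,
      fun i => ?_, fun j => ?_⟩
    · rw [← Finset.sum_div, Finset.sum_add_distrib, hπ.2.1 i, hπopt.2.1 i]; ring
    · rw [← Finset.sum_div, Finset.sum_add_distrib, hπ.2.2 j, hπopt.2.2 j]; ring
  · have hre : (entObj C ε π + entObj C ε πopt) / 2 = ∑ p : Fin m × Fin n,
        ((C p.1 p.2 * π p.1 p.2 + ε * (π p.1 p.2 * Real.log (π p.1 p.2))
          + (C p.1 p.2 * πopt p.1 p.2 + ε * (πopt p.1 p.2 * Real.log (πopt p.1 p.2)))) / 2) := by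
      rw [entObj_eq_objG, entObj_eq_objG]
      unfold objG
      rw [← Finset.sum_add_distrib, Finset.sum_div]
    rw [hre, entObj_eq_objG]
    unfold objG
    dsimp only
    refine Finset.sum_lt_sum (fun p _ => ?_) ⟨(k, l), Finset.mem_univ _, ?_⟩
    · have hconv := Real.convexOn_mul_log.2 (Set.mem_Ici.2 (hπ.1 p.1 p.2))
        (Set.mem_Ici.2 (hπopt.1 p.1 p.2)) (by norm_num : (0:ℝ) ≤ 1/2)
        (by norm_num : (0:ℝ) ≤ 1/2) (by norm_num)
      simp only [smul_eq_mul] at hconv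
      have h1 : (π p.1 p.2 + πopt p.1 p.2) / 2
          = 1/2 * π p.1 p.2 + 1/2 * πopt p.1 p.2 := by ring
      rw [h1]
      nlinarith [hconv]
    · have hconv := Real.strictConvexOn_mul_log.2 (Set.mem_Ici.2 (hπ.1 k l))
        (Set.mem_Ici.2 (hπopt.1 k l)) hl (by norm_num : (0:ℝ) < 1/2)
        (by norm_num : (0:ℝ) < 1/2) (by norm_num)
      simp only [smul_eq_mul] at hconv
      have h1 : (π k l + πopt k l) / 2 = 1/2 * π k l + 1/2 * πopt k l := by ring
      rw [h1]
      nlinarith [hconv]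

lemma minimiser_pos {m n : ℕ} (C : Fin m → Fin n → ℝ) {ε : ℝ} (hε : 0 < ε)
    {a : Fin m → ℝ} {b : Fin n → ℝ}
    (ha : ∀ i, 0 < a i) (hb : ∀ j, 0 < b j)
    (ha1 : ∑ i, a i = 1) (hb1 : ∑ j, b j = 1)
    {π : Fin m → Fin n → ℝ} (hπ : InPolytope a b π)
    (hmin : ∀ π', InPolytope a b π' → entObj C ε π ≤ entObj C ε π') :
    ∀ i j, 0 < π i j := by
  intro i0 j0
  by_contra hc
  have h0 : π i0 j0 = 0 := le_antisymm (not_lt.mp hc) (hπ.1 i0 j0)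
  set π0 : Fin m → Fin n → ℝ := fun i j => a i * b j with hπ0def
  have hπ0 : InPolytope a b π0 := prod_mem_polytope ha hb ha1 hb1
  set c : ℝ := a i0 * b j0 with hcdef
  have hcpos : 0 < c := mul_pos (ha i0) (hb j0)
  set M : ℝ := objG C ε π0 - objG C ε π with hMdef
  set t : ℝ := min (1/2) (Real.exp (-(M + 1) / (ε * c))) with htdef
  have ht0 : 0 < t := lt_min (by norm_num) (Real.exp_pos _)
  have ht2 : t ≤ 1/2 := min_le_left _ _
  have ht1 : t < 1 := lt_of_le_of_lt ht2 (by norm_num)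
  have hεc : 0 < ε * c := mul_pos hε hcpos
  have hlog : ε * c * Real.log t ≤ -(M + 1) := by
    have h1 : Real.log t ≤ -(M + 1) / (ε * c) := by
      calc Real.log t ≤ Real.log (Real.exp (-(M + 1) / (ε * c))) :=
            Real.log_le_log ht0 (min_le_right _ _)
        _ = -(M + 1) / (ε * c) := Real.log_exp _
    calc ε * c * Real.log t ≤ ε * c * (-(M + 1) / (ε * c)) :=
          mul_le_mul_of_nonneg_left h1 hεc.le
      _ = -(M + 1) := by field_simp
  set πt : Fin m → Fin n → ℝ := fun i j => (1 - t) * π i j + t * π0 i j with hπtdef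
  have hπt : InPolytope a b πt := by
    refine ⟨fun i j => add_nonneg (mul_nonneg (by linarith) (hπ.1 i j))
      (mul_nonneg ht0.le (hπ0.1 i j)), fun i => ?_, fun j => ?_⟩
    · simp only [πt, Finset.sum_add_distrib, ← Finset.mul_sum, hπ.2.1 i, hπ0.2.1 i]; ring
    · simp only [πt, Finset.sum_add_distrib, ← Finset.mul_sum, hπ.2.2 j, hπ0.2.2 j]; ring
  -- key convexity estimate
  have hite : (∑ p : Fin m × Fin n, if p = (i0, j0) then ε * (t * c * Real.log t) else 0)
      = ε * (t * c * Real.log t) := by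
    rw [Finset.sum_ite_eq' Finset.univ (i0, j0) (fun _ => ε * (t * c * Real.log t))]
    simp
  have hkey : objG C ε πt ≤ (1 - t) * objG C ε π + t * objG C ε π0 + ε * (t * c * Real.log t) := by
    have hrhs : (1 - t) * objG C ε π + t * objG C ε π0 + ε * (t * c * Real.log t)
        = ∑ p : Fin m × Fin n,
          ((1 - t) * (C p.1 p.2 * π p.1 p.2 + ε * (π p.1 p.2 * Real.log (π p.1 p.2)))
           + t * (C p.1 p.2 * π0 p.1 p.2 + ε * (π0 p.1 p.2 * Real.log (π0 p.1 p.2)))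
           + (if p = (i0, j0) then ε * (t * c * Real.log t) else 0)) := by
      rw [Finset.sum_add_distrib, Finset.sum_add_distrib, hite, ← Finset.mul_sum,
        ← Finset.mul_sum]
      rfl
    rw [hrhs]
    unfold objG
    refine Finset.sum_le_sum fun p _ => ?_
    by_cases hp : p = (i0, j0)
    · subst hp
      dsimp only
      rw [if_pos rfl]
      have hπtv : πt i0 j0 = t * c := by
        show (1 - t) * π i0 j0 + t * (a i0 * b j0) = t * c
        rw [h0, hcdef]; ring
      have hπ0v : π0 i0 j0 = c := rfl
      rw [hπtv, hπ0v, h0, Real.log_mul ht0.ne' hcpos.ne', Real.log_zero]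
      refine le_of_eq (by ring)
    · rw [if_neg hp, add_zero]
      have hconv := Real.convexOn_mul_log.2 (Set.mem_Ici.2 (hπ.1 p.1 p.2))
        (Set.mem_Ici.2 (hπ0.1 p.1 p.2)) (by linarith : (0:ℝ) ≤ 1 - t) ht0.le (by ring)
      simp only [smul_eq_mul] at hconv
      have hlin : πt p.1 p.2 = (1 - t) * π p.1 p.2 + t * π0 p.1 p.2 := rfl
      rw [hlin]
      nlinarith [hconv]
  have hlt : objG C ε πt < objG C ε π := by
    have h2 : ε * (t * c * Real.log t) = t * (ε * c * Real.log t) := by ring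
    have h3 : t * (ε * c * Real.log t) ≤ t * (-(M + 1)) :=
      mul_le_mul_of_nonneg_left hlog ht0.le
    have : (1 - t) * objG C ε π + t * objG C ε π0 + ε * (t * c * Real.log t)
        ≤ objG C ε π - t := by
      rw [h2]
      have : (1 - t) * objG C ε π + t * objG C ε π0 = objG C ε π + t * M := by
        rw [hMdef]; ring
      nlinarith [h3]
    linarith [hkey]
  have := hmin πt hπt
  rw [entObj_eq_objG, entObj_eq_objG] at this
  linarith

lemma minimiser_form {m n : ℕ} (C : Fin m → Fin n → ℝ) {ε : ℝ} (hε : 0 < ε)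
    {a : Fin m → ℝ} {b : Fin n → ℝ} (hm : 0 < m) (hn : 0 < n)
    {π : Fin m → Fin n → ℝ} (hπ : InPolytope a b π) (hpos : ∀ i j, 0 < π i j)
    (hmin : ∀ π', InPolytope a b π' → entObj C ε π ≤ entObj C ε π') :
    ∃ (u : Fin m → ℝ) (v : Fin n → ℝ), (∀ i, 0 < u i) ∧ (∀ j, 0 < v j) ∧
      ∀ i j, π i j = u i * Real.exp (-C i j / ε) * v j := by
  set i₀ : Fin m := ⟨0, hm⟩
  set j₀ : Fin n := ⟨0, hn⟩
  set R : Fin m → Fin n → ℝ := fun i j => π i j * Real.exp (C i j / ε) with hRdef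
  have hRpos : ∀ i j, 0 < R i j := fun i j => mul_pos (hpos i j) (Real.exp_pos _)
  have hR : ∀ i j, R i j = Real.exp (Real.log (π i j) + C i j / ε) := by
    intro i j
    rw [Real.exp_add, Real.exp_log (hpos i j)]
  -- the four-point relation
  have key : ∀ i j, R i j * R i₀ j₀ = R i j₀ * R i₀ j := by
    intro i j
    by_cases hi : i = i₀
    · subst hi; ring
    by_cases hj : j = j₀
    · subst hj; ring
    -- perturbation directions
    set r : Fin m → ℝ := fun k => (if k = i then (1:ℝ) else 0) - (if k = i₀ then 1 else 0)
      with hrdef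
    set c : Fin n → ℝ := fun l => (if l = j then (1:ℝ) else 0) - (if l = j₀ then 1 else 0)
      with hcdef
    have hrsum : ∑ k, r k = 0 := by
      simp [hrdef, Finset.sum_sub_distrib]
    have hcsum : ∑ l, c l = 0 := by
      simp [hcdef, Finset.sum_sub_distrib]
    have hrabs : ∀ k, |r k| ≤ 1 := by
      intro k; simp only [hrdef]; split_ifs <;> norm_num
    have hcabs : ∀ l, |c l| ≤ 1 := by
      intro l; simp only [hcdef]; split_ifs <;> norm_num
    have hrne : ∀ k, r k ≠ 0 → (k = i ∨ k = i₀) := by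
      intro k hk
      by_contra hcon
      push_neg at hcon
      simp [hrdef, hcon.1, hcon.2] at hk
    have hcne : ∀ l, c l ≠ 0 → (l = j ∨ l = j₀) := by
      intro l hl
      by_contra hcon
      push_neg at hcon
      simp [hcdef, hcon.1, hcon.2] at hl
    set δ : ℝ := min (min (π i j) (π i₀ j₀)) (min (π i j₀) (π i₀ j)) with hδdef
    have hδ : 0 < δ := lt_min (lt_min (hpos i j) (hpos i₀ j₀)) (lt_min (hpos i j₀) (hpos i₀ j))
    -- membership of perturbed plans
    have hmem : ∀ t : ℝ, |t| ≤ δ → InPolytope a b (fun k l => π k l + t * (r k * c l)) := by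
      intro t ht
      refine ⟨fun k l => ?_, fun k => ?_, fun l => ?_⟩
      · by_cases hrc : r k * c l = 0
        · simp [hrc, (hπ.1 k l)]
        · have hrk : r k ≠ 0 := fun h => hrc (by simp [h])
          have hcl : c l ≠ 0 := fun h => hrc (by simp [h])
          have hklδ : δ ≤ π k l := by
            rcases hrne k hrk with h1 | h1 <;> rcases hcne l hcl with h2 | h2 <;>
              subst h1 <;> subst h2
            · exact le_trans (min_le_left _ _) (min_le_left _ _)
            · exact le_trans (min_le_right _ _) (min_le_left _ _)
            · exact le_trans (min_le_right _ _) (min_le_right _ _)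
            · exact le_trans (min_le_left _ _) (min_le_right _ _)
          have habs : |t * (r k * c l)| ≤ δ := by
            rw [abs_mul, abs_mul]
            calc |t| * (|r k| * |c l|) ≤ |t| * 1 := by
                  have h1 : |r k| * |c l| ≤ 1 :=
                    mul_le_one₀ (hrabs k) (abs_nonneg _) (hcabs l)
                  exact mul_le_mul_of_nonneg_left h1 (abs_nonneg t)
              _ = |t| := mul_one _
              _ ≤ δ := ht
          have h2 : -δ ≤ t * (r k * c l) := by
            have h3 := neg_abs_le (t * (r k * c l))
            linarith [neg_le_neg habs]
          show 0 ≤ π k l + t * (r k * c l)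
          linarith
      · rw [Finset.sum_add_distrib, hπ.2.1 k]
        have : ∑ l, t * (r k * c l) = t * r k * ∑ l, c l := by
          rw [Finset.mul_sum]; exact Finset.sum_congr rfl fun l _ => by ring
        rw [this, hcsum]; ring
      · rw [Finset.sum_add_distrib, hπ.2.2 l]
        have : ∑ k, t * (r k * c l) = t * c l * ∑ k, r k := by
          rw [Finset.mul_sum]; exact Finset.sum_congr rfl fun k _ => by ring
        rw [this, hrsum]; ring
    -- the 1-D objective
    set g : ℝ → ℝ := fun t => ∑ p : Fin m × Fin n,
      (C p.1 p.2 * (π p.1 p.2 + t * (r p.1 * c p.2)) +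
        ε * ((π p.1 p.2 + t * (r p.1 * c p.2)) *
          Real.log (π p.1 p.2 + t * (r p.1 * c p.2)))) with hgdef
    have hgval : ∀ t : ℝ, g t = objG C ε (fun k l => π k l + t * (r k * c l)) := fun t => rfl
    have hlocmin : IsLocalMin g 0 := by
      have hev : ∀ᶠ t in nhds (0:ℝ), g 0 ≤ g t := by
        filter_upwards [Metric.closedBall_mem_nhds (0:ℝ) hδ] with t ht
        rw [Metric.mem_closedBall, Real.dist_eq, sub_zero] at ht
        have h1 := hmin _ (hmem t ht)
        rw [entObj_eq_objG, entObj_eq_objG] at h1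
        have h0 : g 0 = objG C ε π := by
          rw [hgval]
          congr 1
          funext k l
          ring
        rw [h0, hgval t]
        exact h1
      exact hev
    -- derivative of g at 0
    set D : ℝ := ∑ p : Fin m × Fin n,
      (C p.1 p.2 * (r p.1 * c p.2) +
        ε * ((Real.log (π p.1 p.2) + 1) * (r p.1 * c p.2))) with hDdef
    have hderiv : HasDerivAt g D 0 := by
      rw [hgdef, hDdef]
      refine HasDerivAt.fun_sum fun p _ => ?_
      have hf : HasDerivAt (fun t : ℝ => π p.1 p.2 + t * (r p.1 * c p.2))
          (r p.1 * c p.2) 0 := by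
        simpa using (hasDerivAt_mul_const (r p.1 * c p.2)).const_add (π p.1 p.2)
      have hne : π p.1 p.2 + 0 * (r p.1 * c p.2) ≠ 0 := by
        have := hpos p.1 p.2; intro h; rw [zero_mul, add_zero] at h; linarith
      have hg : HasDerivAt (fun x : ℝ => x * Real.log x)
          (Real.log (π p.1 p.2 + 0 * (r p.1 * c p.2)) + 1)
          ((fun t : ℝ => π p.1 p.2 + t * (r p.1 * c p.2)) 0) :=
        Real.hasDerivAt_mul_log hne
      have hcomp := hg.comp 0 hf
      have h00 : π p.1 p.2 + 0 * (r p.1 * c p.2) = π p.1 p.2 := by ring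
      rw [h00] at hcomp
      exact (hf.const_mul (C p.1 p.2)).add (hcomp.const_mul ε)
    have hD0 : D = 0 := hlocmin.hasDerivAt_eq_zero hderiv
    -- compute D explicitly
    set E : Fin m → Fin n → ℝ := fun k l => C k l + ε * (Real.log (π k l) + 1) with hEdef
    have hDcalc : D = (E i j - E i j₀) - (E i₀ j - E i₀ j₀) := by
      rw [hDdef]
      have h1 : ∀ p : Fin m × Fin n,
          C p.1 p.2 * (r p.1 * c p.2) + ε * ((Real.log (π p.1 p.2) + 1) * (r p.1 * c p.2))
          = r p.1 * (c p.2 * E p.1 p.2) := by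
        intro p; rw [hEdef]; ring
      rw [Finset.sum_congr rfl fun p _ => h1 p]
      rw [Fintype.sum_prod_type]
      have hinner : ∀ k, ∑ l, r k * (c l * E k l) = r k * (E k j - E k j₀) := by
        intro k
        rw [← Finset.mul_sum]
        congr 1
        simp only [hcdef, sub_mul, ite_mul, one_mul, zero_mul, Finset.sum_sub_distrib,
          Finset.sum_ite_eq', Finset.mem_univ, if_true]
      rw [Finset.sum_congr rfl fun k _ => hinner k]
      simp only [hrdef, sub_mul, ite_mul, one_mul, zero_mul, Finset.sum_sub_distrib,
        Finset.sum_ite_eq', Finset.mem_univ, if_true]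
    have hrel : Real.log (π i j) + C i j / ε + (Real.log (π i₀ j₀) + C i₀ j₀ / ε)
        = Real.log (π i j₀) + C i j₀ / ε + (Real.log (π i₀ j) + C i₀ j / ε) := by
      rw [hDcalc, hEdef] at hD0
      simp only at hD0
      have hεne : ε ≠ 0 := hε.ne'
      field_simp
      nlinarith [hD0]
    rw [hR i j, hR i₀ j₀, hR i j₀, hR i₀ j, ← Real.exp_add, ← Real.exp_add]
    congr 1
  -- assemble u and v
  refine ⟨fun i => R i j₀ / R i₀ j₀, fun j => R i₀ j,
    fun i => div_pos (hRpos i j₀) (hRpos i₀ j₀), fun j => hRpos i₀ j, ?_⟩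
  intro i j
  have h1 : R i j * Real.exp (-C i j / ε) = π i j := by
    rw [hRdef]
    simp only
    rw [mul_assoc, ← Real.exp_add]
    have : C i j / ε + -C i j / ε = 0 := by ring
    rw [this, Real.exp_zero, mul_one]
  calc π i j = R i j * Real.exp (-C i j / ε) := h1.symm
    _ = (R i j * R i₀ j₀) / R i₀ j₀ * Real.exp (-C i j / ε) := by
        rw [mul_div_cancel_right₀ (R i j) (hRpos i₀ j₀).ne']
    _ = (R i j₀ * R i₀ j) / R i₀ j₀ * Real.exp (-C i j / ε) := by rw [key i j]
    _ = R i j₀ / R i₀ j₀ * Real.exp (-C i j / ε) * R i₀ j := by ring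

/-- the minimiser of the entropy-regularised transport problem over
`U(a,b)` (with strictly positive marginals) exists, is unique, and is of the Sinkhorn
form `π† = diag(u) K diag(v)` with `u, v > 0` and `K_{ij} = exp(−C_{ij}/ε)`. -/
theorem sinkhorn_minimiser {m n : ℕ} (C : Fin m → Fin n → ℝ) (ε : ℝ) (hε : 0 < ε)
    (a : Fin m → ℝ) (b : Fin n → ℝ)
    (ha : ∀ i, 0 < a i) (hb : ∀ j, 0 < b j)
    (ha1 : ∑ i, a i = 1) (hb1 : ∑ j, b j = 1) :
    ∃ πopt : Fin m → Fin n → ℝ,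
      InPolytope a b πopt ∧
      (∀ π : Fin m → Fin n → ℝ, InPolytope a b π → entObj C ε πopt ≤ entObj C ε π) ∧
      (∀ π : Fin m → Fin n → ℝ, InPolytope a b π →
        (∀ π' : Fin m → Fin n → ℝ, InPolytope a b π' → entObj C ε π ≤ entObj C ε π') →
        π = πopt) ∧
      (∃ (u : Fin m → ℝ) (v : Fin n → ℝ), (∀ i, 0 < u i) ∧ (∀ j, 0 < v j) ∧
        ∀ i j, πopt i j = u i * Real.exp (-C i j / ε) * v j) := by
  obtain ⟨πopt, hmem, hmin⟩ := exists_minimiser C ε ha hb ha1 hb1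
  have hm : 0 < m := by
    rcases Nat.eq_zero_or_pos m with h | h
    · subst h; simp at ha1
    · exact h
  have hn : 0 < n := by
    rcases Nat.eq_zero_or_pos n with h | h
    · subst h; simp at hb1
    · exact h
  have hpos := minimiser_pos C hε ha hb ha1 hb1 hmem hmin
  refine ⟨πopt, hmem, hmin, ?_, ?_⟩
  · intro π hπ hminπ
    rcases minimiser_unique C hε hπ hmem with h | ⟨μ, hμ, hlt⟩
    · exact h
    · exfalso
      have h1 := hminπ μ hμ
      have h2 : entObj C ε π = entObj C ε πopt :=
        le_antisymm (hminπ _ hmem) (hmin _ hπ)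
      rw [h2] at h1
      linarith
  · exact minimiser_form C hε hm hn hmem hpos hmin
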